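/- In the Butcher–Connes–Kreimer Hopf algebra of rooted trees, the coproduct defined recursively by Δ(B⁺(ω)) = B⁺(ω) ⊗ 1 + (id ⊗ B⁺)Δ(ω) (extended multiplicatively to forests, with Δ(1) = 1 ⊗ 1) is coassociative. -/
import Mathlib


/-- Rooted trees: a tree is a root with a list of branches.  Forests are lists of
trees, and `PT.node` is the operator `B⁺` attaching a forest to a new root. -/
inductive PT : Type
  | node : List PT → PT

/-- The Butcher–Connes–Kreimer coproduct on forests, given as a multiset of pairs
(pruned part, root part), i.e. the structure constants of `Δ` on the basis of
forests of the free algebra on rooted trees.  It is determined by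
`Δ(1) = 1 ⊗ 1`, multiplicativity `Δ(t·ω) = Δ(t)Δ(ω)`, and the recursion
`Δ(B⁺(ω)) = B⁺(ω) ⊗ 1 + (id ⊗ B⁺)Δ(ω)`. -/
def ΔBCK : List PT → Multiset (List PT × List PT)
  | [] => {([], [])}
  | PT.node l :: ω =>
      ((([PT.node l], ([] : List PT)) ::ₘ
          (ΔBCK l).map (fun p => (p.1, [PT.node p.2]))).bind
        (fun p => (ΔBCK ω).map (fun q => (p.1 ++ q.1, p.2 ++ q.2))))
decreasing_by
  all_goals simp_wf <;> omega

def szF : List PT → ℕ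
  | [] => 0
  | PT.node l :: ω => szF l + szF ω + 1
decreasing_by
  all_goals simp_wf <;> omega

def Δh (l : List PT) : Multiset (List PT × List PT) :=
  ([PT.node l], ([] : List PT)) ::ₘ (ΔBCK l).map (fun p => (p.1, [PT.node p.2]))

def m2 (s t : Multiset (List PT × List PT)) : Multiset (List PT × List PT) :=
  s.bind (fun p => t.map (fun q => (p.1 ++ q.1, p.2 ++ q.2)))

lemma ΔBCK_nil : ΔBCK [] = {([], [])} := by rw [ΔBCK]

lemma ΔBCK_cons (l : List PT) (ω : List PT) :
    ΔBCK (PT.node l :: ω) = m2 (Δh l) (ΔBCK ω) := by rw [ΔBCK]; rfl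

lemma m2_nilpair (s : Multiset (List PT × List PT)) : m2 s {([], [])} = s := by
  simp only [m2, Multiset.map_singleton, List.append_nil]
  simpa using Multiset.bind_singleton (s := s) (fun p : List PT × List PT => p)

lemma ΔBCK_single (l : List PT) : ΔBCK [PT.node l] = Δh l := by
  rw [ΔBCK_cons, ΔBCK_nil, m2_nilpair]

lemma m2_assoc (s t u : Multiset (List PT × List PT)) :
    m2 (m2 s t) u = m2 s (m2 t u) := by
  simp [m2, Multiset.bind_assoc, Multiset.bind_map, Multiset.map_bind,
    Multiset.map_map, Function.comp_def, List.append_assoc]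

lemma ΔBCK_append (a b : List PT) : ΔBCK (a ++ b) = m2 (ΔBCK a) (ΔBCK b) := by
  induction a with
  | nil => simp [ΔBCK_nil, m2, Multiset.singleton_bind]
  | cons t a ih =>
    cases t with
    | node l => rw [List.cons_append, ΔBCK_cons, ΔBCK_cons, ih, m2_assoc]

def m3 (s t : Multiset (List PT × List PT × List PT)) :
    Multiset (List PT × List PT × List PT) :=
  s.bind (fun p => t.map (fun q => (p.1 ++ q.1, p.2.1 ++ q.2.1, p.2.2 ++ q.2.2)))

def Lf (ω : List PT) : Multiset (List PT × List PT × List PT) :=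
  (ΔBCK ω).bind (fun p => (ΔBCK p.1).map (fun q => (q.1, q.2, p.2)))

def Rf (ω : List PT) : Multiset (List PT × List PT × List PT) :=
  (ΔBCK ω).bind (fun p => (ΔBCK p.2).map (fun q => (p.1, q.1, q.2)))

lemma Lf_append (a b : List PT) : Lf (a ++ b) = m3 (Lf a) (Lf b) := by
  simp only [Lf, m3, ΔBCK_append, m2, Multiset.bind_assoc, Multiset.bind_map,
    Multiset.map_bind, Multiset.map_map, Function.comp_def]
  refine Multiset.bind_congr (fun p _ => ?_)
  exact Multiset.bind_bind _ _

lemma Rf_append (a b : List PT) : Rf (a ++ b) = m3 (Rf a) (Rf b) := by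
  simp only [Rf, m3, ΔBCK_append, m2, Multiset.bind_assoc, Multiset.bind_map,
    Multiset.map_bind, Multiset.map_map, Function.comp_def]
  refine Multiset.bind_congr (fun p _ => ?_)
  exact Multiset.bind_bind _ _

lemma key (l : List PT) (ih : Lf l = Rf l) : Lf [PT.node l] = Rf [PT.node l] := by
  rw [Lf, Rf, ΔBCK_single, Δh, Multiset.cons_bind, Multiset.cons_bind,
    Multiset.bind_map, Multiset.bind_map]
  have h := congrArg (Multiset.map
    (fun x : List PT × List PT × List PT => (x.1, x.2.1, [PT.node x.2.2]))) ih
  simp only [Lf, Rf, Multiset.map_bind, Multiset.map_map, Function.comp_def] at h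
  simp only [ΔBCK_single, ΔBCK_nil, Δh, Multiset.map_cons, Multiset.map_map,
    Multiset.map_singleton, Function.comp_def]
  simp only [← Multiset.singleton_add, Multiset.bind_add, Multiset.bind_singleton]
  rw [h]
  abel

lemma szF_cons (l : List PT) (ω : List PT) :
    szF (PT.node l :: ω) = szF l + szF ω + 1 := by rw [szF]

lemma main (n : ℕ) : ∀ ω : List PT, szF ω ≤ n → Lf ω = Rf ω := by
  induction n with
  | zero =>
    intro ω hω
    cases ω with
    | nil => simp [Lf, Rf, ΔBCK_nil]
    | cons t ω' => cases t with | node l => rw [szF_cons] at hω; omega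
  | succ n ih =>
    intro ω hω
    cases ω with
    | nil => simp [Lf, Rf, ΔBCK_nil]
    | cons t ω' =>
      cases t with
      | node l =>
        rw [szF_cons] at hω
        cases ω' with
        | nil =>
          exact key l (ih l (by simpa [szF] using hω))
        | cons u ω'' =>
          have h1 : szF [PT.node l] ≤ n := by
            cases u with | node m =>
              rw [szF_cons] at hω ⊢
              have : szF ([] : List PT) = 0 := by rw [szF]
              omega
          have h2 : szF (u :: ω'') ≤ n := by
            cases u with | node m => rw [szF_cons] at hω ⊢; omega
          have : PT.node l :: u :: ω'' = [PT.node l] ++ (u :: ω'') := rfl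
          rw [this, Lf_append, Rf_append, ih _ h1, ih _ h2]

/-- the Butcher–Connes–Kreimer coproduct is coassociative:
`(Δ ⊗ id)Δ = (id ⊗ Δ)Δ` on every forest. -/
theorem BCK_coassociative (ω : List PT) :
    (ΔBCK ω).bind (fun p => (ΔBCK p.1).map (fun q => (q.1, q.2, p.2)))
      = (ΔBCK ω).bind (fun p => (ΔBCK p.2).map (fun q => (p.1, q.1, q.2))) :=
  main (szF ω) ω le_rfl
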